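/- Consider J control units (J ≥ 4 even) split into K = J/2 groups of 2 units each, where only the first group shares the treated unit's factor. Minimize Q(w) = σ²(1 + w'w) + (1 - s₁)² + Σ_{k=2}^{K} s_k² over Δ^{J-1}, where s_k = w_{2k-1} + w_{2k} is the total weight on group k. Then at the unique minimizer, the total misallocated weight equals Σ_{k ≥ 2} s_k = ((J-2)/J) · σ²/(σ² + 2). -/

import Mathlib

lemma fiber_eq (K : ℕ) (k : Fin K) :
    Finset.univ.filter (fun j : Fin (2*K) => (j : ℕ) / 2 = (k : ℕ)) =
    {⟨2*k, by omega⟩, ⟨2*k+1, by omega⟩} := by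
  ext j
  simp only [Finset.mem_filter, Finset.mem_univ, true_and, Finset.mem_insert,
    Finset.mem_singleton, Fin.ext_iff]
  omega

lemma sum_fiber (K : ℕ) (w : Fin (2*K) → ℝ) (k : Fin K) :
    ∑ j ∈ Finset.univ.filter (fun j : Fin (2*K) => (j : ℕ) / 2 = (k : ℕ)), w j
      = w ⟨2*k, by omega⟩ + w ⟨2*k+1, by omega⟩ := by
  rw [fiber_eq]
  exact Finset.sum_pair (by simp [Fin.ext_iff])

lemma sum_groups (K : ℕ) (w : Fin (2*K) → ℝ) :
    ∑ k : Fin K, ∑ j ∈ Finset.univ.filter (fun j : Fin (2*K) => (j : ℕ) / 2 = (k : ℕ)), w j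
      = ∑ j, w j := by
  have := Finset.sum_fiberwise_of_maps_to
    (g := fun j : Fin (2*K) => (⟨(j : ℕ)/2, by omega⟩ : Fin K))
    (s := Finset.univ) (t := Finset.univ) (fun i _ => Finset.mem_univ _) w
  rw [← this]
  refine Finset.sum_congr rfl fun k _ => Finset.sum_congr ?_ fun _ _ => rfl
  apply Finset.filter_congr
  intro j _
  simp [Fin.ext_iff]

theorem many_groups_misallocation
    (K : ℕ) (hK : 2 ≤ K) (σ2 : ℝ) (hσ : 0 < σ2) :
    let J : ℕ := 2 * K
    let k0 : Fin K := ⟨0, by omega⟩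
    let s : (Fin (2 * K) → ℝ) → Fin K → ℝ := fun w k =>
      ∑ j ∈ Finset.univ.filter (fun j : Fin (2 * K) => (j : ℕ) / 2 = (k : ℕ)), w j
    let Q : (Fin (2 * K) → ℝ) → ℝ := fun w =>
      σ2 * (1 + ∑ j, w j ^ 2) +
        (1 - s w k0) ^ 2 + ∑ k ∈ Finset.univ.filter (fun k : Fin K => k ≠ k0), (s w k) ^ 2
    ∃ wbar : Fin (2 * K) → ℝ,
      (wbar ∈ stdSimplex ℝ (Fin (2 * K)) ∧
        ∀ v ∈ stdSimplex ℝ (Fin (2 * K)), Q wbar ≤ Q v) ∧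
      (∀ w' : Fin (2 * K) → ℝ,
        (w' ∈ stdSimplex ℝ (Fin (2 * K)) ∧
          ∀ v ∈ stdSimplex ℝ (Fin (2 * K)), Q w' ≤ Q v) → w' = wbar) ∧
      (∑ k ∈ Finset.univ.filter (fun k : Fin K => k ≠ k0), s wbar k
        = (((J : ℝ) - 2) / (J : ℝ)) * (σ2 / (σ2 + 2))) := by
  intro J k0 s Q
  have hKR : (0:ℝ) < (K:ℝ) := by positivity
  have hd : (0:ℝ) < σ2 + 2 := by linarith
  set b : ℝ := σ2 / ((K:ℝ) * (σ2 + 2)) with hbdef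
  set a : ℝ := 1 - ((K:ℝ) - 1) * b with hadef
  have hb : 0 < b := by positivity
  have hKb : (K:ℝ) * (σ2 + 2) * b = σ2 := by
    rw [hbdef]; field_simp
  have ha : 0 < a := by
    rw [hadef]
    have : ((K:ℝ) - 1) * b < (K:ℝ) * b := by nlinarith
    have h1 : (K:ℝ) * b = σ2 / (σ2 + 2) := by
      field_simp at hKb ⊢; linarith [hKb]
    have : σ2 / (σ2 + 2) < 1 := by rw [div_lt_one hd]; linarith
    nlinarith
  set wbar : Fin (2*K) → ℝ := fun j => if (j : ℕ) / 2 = 0 then a/2 else b/2 with hwbar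
  set F : Finset (Fin K) := Finset.univ.filter (fun k : Fin K => k ≠ k0) with hF
  have hFerase : F = Finset.univ.erase k0 := by
    rw [hF, Finset.filter_ne']
  have hFcard : (F.card : ℝ) = (K:ℝ) - 1 := by
    rw [hFerase, Finset.card_erase_of_mem (Finset.mem_univ _), Finset.card_univ, Fintype.card_fin]
    have : 1 ≤ K := by omega
    push_cast [Nat.cast_sub this]
    ring
  -- group sums of wbar
  have hk0v : (k0 : ℕ) = 0 := rfl
  have hs_wbar : ∀ k : Fin K, s wbar k = if k = k0 then a else b := by
    intro k
    show (∑ j ∈ Finset.univ.filter (fun j : Fin (2*K) => (j:ℕ)/2 = (k:ℕ)), wbar j) = _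
    rw [sum_fiber]
    have e1 : (2*(k:ℕ))/2 = (k:ℕ) := by omega
    have e2 : (2*(k:ℕ)+1)/2 = (k:ℕ) := by omega
    simp only [hwbar, e1, e2]
    by_cases hk : k = k0
    · have : (k:ℕ) = 0 := by rw [hk]
      simp [this, hk, hk0v] <;> ring
    · have : (k:ℕ) ≠ 0 := by
        intro h; exact hk (Fin.ext (by simp [h, hk0v]))
      simp [this, hk] <;> ring
  -- splitting sums over Fin K
  have hsplit : ∀ f : Fin K → ℝ, ∑ k, f k = f k0 + ∑ k ∈ F, f k := by
    intro f
    rw [hFerase, Finset.add_sum_erase _ f (Finset.mem_univ k0)]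
  have hS : ∀ w : Fin (2*K) → ℝ, ∑ k, s w k = ∑ j, w j := fun w => sum_groups K w
  -- the key cross-sum lemma
  have key : ∀ (c d : ℝ) (v : Fin (2*K) → ℝ),
      ∑ j : Fin (2*K), (if (j:ℕ)/2 = 0 then c else d) * v j
        = c * s v k0 + d * ∑ k ∈ F, s v k := by
    intro c d v
    rw [← sum_groups K (fun j => (if (j:ℕ)/2 = 0 then c else d) * v j)]
    have step : ∀ k : Fin K,
        (∑ j ∈ Finset.univ.filter (fun j : Fin (2*K) => (j:ℕ)/2 = (k:ℕ)),
          (if (j:ℕ)/2 = 0 then c else d) * v j)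
        = (if k = k0 then c else d) * s v k := by
      intro k
      rw [sum_fiber]
      have hsv : s v k = v ⟨2*(k:ℕ), by omega⟩ + v ⟨2*(k:ℕ)+1, by omega⟩ := sum_fiber K v k
      have e1 : (2*(k:ℕ))/2 = (k:ℕ) := by omega
      have e2 : (2*(k:ℕ)+1)/2 = (k:ℕ) := by omega
      simp only [e1, e2, hsv]
      by_cases hk : k = k0
      · have : (k:ℕ) = 0 := by rw [hk]
        simp [this, hk, hk0v] <;> ring
      · have : (k:ℕ) ≠ 0 := by
          intro h; exact hk (Fin.ext (by simp [h, hk0v]))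
        simp [this, hk] <;> ring
    calc ∑ k : Fin K, ∑ j ∈ Finset.univ.filter (fun j : Fin (2*K) => (j:ℕ)/2 = (k:ℕ)),
            (if (j:ℕ)/2 = 0 then c else d) * v j
        = ∑ k : Fin K, (if k = k0 then c else d) * s v k :=
          Finset.sum_congr rfl fun k _ => step k
      _ = (if k0 = k0 then c else d) * s v k0 + ∑ k ∈ F, (if k = k0 then c else d) * s v k :=
          hsplit _
      _ = c * s v k0 + d * ∑ k ∈ F, s v k := by
          have hrest : ∑ k ∈ F, (if k = k0 then c else d) * s v k
              = ∑ k ∈ F, d * s v k := by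
            refine Finset.sum_congr rfl fun k hk => ?_
            rw [hF] at hk
            simp only [Finset.mem_filter] at hk
            rw [if_neg hk.2]
          rw [if_pos rfl, hrest, ← Finset.mul_sum]
  -- wbar group sums
  have hswk0 : s wbar k0 = a := by rw [hs_wbar]; simp
  have hswF : ∑ k ∈ F, s wbar k = ((K:ℝ) - 1) * b := by
    have : ∀ k ∈ F, s wbar k = b := by
      intro k hk
      rw [hF] at hk; simp only [Finset.mem_filter] at hk
      rw [hs_wbar, if_neg hk.2]
    rw [Finset.sum_congr rfl this, Finset.sum_const, nsmul_eq_mul, hFcard]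
  have hswF2 : ∑ k ∈ F, (s wbar k) ^ 2 = ((K:ℝ) - 1) * b ^ 2 := by
    have : ∀ k ∈ F, (s wbar k) ^ 2 = b ^ 2 := by
      intro k hk
      rw [hF] at hk; simp only [Finset.mem_filter] at hk
      rw [hs_wbar, if_neg hk.2]
    rw [Finset.sum_congr rfl this, Finset.sum_const, nsmul_eq_mul, hFcard]
  -- sums of wbar
  have hsum_wbar : ∑ j, wbar j = 1 := by
    rw [← hS wbar, hsplit (s wbar), hswk0, hswF, hadef]; ring
  have hWsq : ∑ j, wbar j ^ 2 = a^2/2 + ((K:ℝ) - 1) * b^2/2 := by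
    have e : ∀ j : Fin (2*K), wbar j ^ 2 = (if (j:ℕ)/2 = 0 then a/2 else b/2) * wbar j := by
      intro j; rw [hwbar]; by_cases h : (j:ℕ)/2 = 0 <;> simp [h] <;> ring
    rw [Finset.sum_congr rfl fun j _ => e j, key (a/2) (b/2) wbar, hswk0, hswF]
    ring
  have hwbar_mem : wbar ∈ stdSimplex ℝ (Fin (2*K)) := by
    constructor
    · intro j
      rw [hwbar]
      dsimp only
      split_ifs <;> positivity
    · exact hsum_wbar
  -- decomposition of Q v - Q wbar for v in the simplex
  have main : ∀ v ∈ stdSimplex ℝ (Fin (2*K)),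
      Q v = Q wbar + (σ2 * (∑ j, (v j - wbar j)^2) + (s v k0 - a)^2
        + ∑ k ∈ F, (s v k - b)^2) := by
    intro v hv
    obtain ⟨hv0, hv1⟩ := hv
    set S0 := s v k0 with hS0
    set T := ∑ k ∈ F, s v k with hT
    set T2 := ∑ k ∈ F, (s v k)^2 with hT2
    set A := ∑ j, v j ^ 2 with hA
    have hST : S0 + T = 1 := by
      rw [hS0, hT, ← hsplit (s v), hS v, hv1]
    have hCross : ∑ j, wbar j * v j = (a/2) * S0 + (b/2) * T := by
      have e : ∀ j : Fin (2*K), wbar j * v j = (if (j:ℕ)/2 = 0 then a/2 else b/2) * v j := by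
        intro j; rw [hwbar]
      rw [Finset.sum_congr rfl fun j _ => e j, key (a/2) (b/2) v, hS0, hT]
    have hU : ∑ j, (v j - wbar j)^2
        = A - 2 * ((a/2) * S0 + (b/2) * T) + (a^2/2 + ((K:ℝ) - 1) * b^2/2) := by
      have e : ∀ j : Fin (2*K), (v j - wbar j)^2 = v j ^2 - 2 * (wbar j * v j) + wbar j ^2 := by
        intro j; ring
      rw [Finset.sum_congr rfl fun j _ => e j]
      rw [Finset.sum_add_distrib, Finset.sum_sub_distrib, ← Finset.mul_sum, hCross, hWsq, hA]
    have hV : ∑ k ∈ F, (s v k - b)^2 = T2 - 2 * b * T + ((K:ℝ) - 1) * b^2 := by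
      have e : ∀ k : Fin K, (s v k - b)^2 = (s v k)^2 - 2 * b * s v k + b^2 := by
        intro k; ring
      rw [Finset.sum_congr rfl fun k _ => e k]
      rw [Finset.sum_add_distrib, Finset.sum_sub_distrib, ← Finset.mul_sum, Finset.sum_const,
        nsmul_eq_mul, hFcard, ← hT, ← hT2]
    have hQv : Q v = σ2 * (1 + A) + (1 - S0)^2 + T2 := rfl
    have hQw : Q wbar = σ2 * (1 + (a^2/2 + ((K:ℝ) - 1) * b^2/2)) + (1 - a)^2
        + ((K:ℝ) - 1) * b^2 := by
      show σ2 * (1 + ∑ j, wbar j ^2) + (1 - s wbar k0)^2 + ∑ k ∈ F, (s wbar k)^2 = _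
      rw [hWsq, hswk0, hswF2]
    rw [hQv, hQw, hU, hV]
    have hTv : T = 1 - S0 := by linarith
    rw [hTv, hadef]
    have hKne : (K:ℝ) * (σ2 + 2) ≠ 0 := by positivity
    linear_combination (1 + b - S0 - (K:ℝ) * b) * hKb
  have hmin : ∀ v ∈ stdSimplex ℝ (Fin (2*K)), Q wbar ≤ Q v := by
    intro v hv
    rw [main v hv]
    have h1 : 0 ≤ ∑ j, (v j - wbar j)^2 := Finset.sum_nonneg fun j _ => sq_nonneg _
    have h2 : 0 ≤ ∑ k ∈ F, (s v k - b)^2 := Finset.sum_nonneg fun k _ => sq_nonneg _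
    nlinarith [sq_nonneg (s v k0 - a)]
  refine ⟨wbar, ⟨hwbar_mem, hmin⟩, ?_, ?_⟩
  · rintro w' ⟨hw'mem, hw'min⟩
    have h1 : Q w' ≤ Q wbar := hw'min wbar hwbar_mem
    have h2 : Q wbar ≤ Q w' := hmin w' hw'mem
    have heq : Q w' = Q wbar := le_antisymm h1 h2
    have := main w' hw'mem
    rw [heq] at this
    set U : ℝ := ∑ j, (w' j - wbar j)^2 with hUdef
    have h3 : 0 ≤ U := Finset.sum_nonneg fun j _ => sq_nonneg _
    have h4 : 0 ≤ ∑ k ∈ F, (s w' k - b)^2 := Finset.sum_nonneg fun k _ => sq_nonneg _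
    have h5 : 0 ≤ (s w' k0 - a)^2 := sq_nonneg _
    have hσU : σ2 * U = 0 := by
      have hge : 0 ≤ σ2 * U := mul_nonneg hσ.le h3
      linarith
    have hU0 : U = 0 := by
      rcases mul_eq_zero.1 hσU with h | h
      · exact absurd h (ne_of_gt hσ)
      · exact h
    funext j
    have := (Finset.sum_eq_zero_iff_of_nonneg (fun j _ => sq_nonneg (w' j - wbar j))).1 hU0
      j (Finset.mem_univ j)
    have := sq_eq_zero_iff.1 this
    linarith
  · rw [hswF]
    have hJ : ((J:ℕ) : ℝ) = 2 * (K:ℝ) := by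
      show ((2*K : ℕ) : ℝ) = 2 * (K:ℝ); push_cast; ring
    rw [hJ, hbdef]
    have hKne : (K:ℝ) ≠ 0 := ne_of_gt hKR
    field_simp
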